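/- Let z ≥ 1 and t be integers with 2 ≤ t ≤ z + 1. If a partition λ is both a t-core and z-asymmetric, then λ is the empty partition. -/

import Mathlib

open BigOperators

/-- The beta set of a partition `lam` of length at most `m`:
`β_j(λ) = λ_j + m - j` (0-indexed: `β j = λ j + (m - 1 - j)`). -/
def betaSet (m : ℕ) (lam : Fin m → ℕ) (j : Fin m) : ℕ :=
  lam j + (m - 1 - (j : ℕ))

/-- `λ` is a `t`-core: whenever a beta number is `≥ t`, the beta number `β - t` also
occurs (equivalently, no hook length of `λ` equals `t`). -/
def IsTCore (t m : ℕ) (lam : Fin m → ℕ) : Prop :=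
  ∀ j : Fin m, t ≤ betaSet m lam j →
    ∃ k : Fin m, betaSet m lam k = betaSet m lam j - t

/-- The (Frobenius) rank of a partition: `max {k : λ_k ≥ k}` (`0` for the empty
partition). -/
def rankP (m : ℕ) (lam : Fin m → ℕ) : ℕ :=
  (Finset.univ.filter fun j : Fin m => (j : ℕ) + 1 ≤ lam j).sup fun j => (j : ℕ) + 1

/-- `λ` is `z`-asymmetric: `λ'_i - i = λ_i - i + z` for all `1 ≤ i ≤ rank(λ)`, where
`λ'_i = #{j : λ_j ≥ i}` is the conjugate partition. -/
def ZAsym (z : ℤ) (m : ℕ) (lam : Fin m → ℕ) : Prop :=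
  ∀ i : Fin m, (i : ℕ) + 1 ≤ rankP m lam →
    ((Finset.univ.filter fun j : Fin m => (i : ℕ) + 1 ≤ lam j).card : ℤ) = (lam i : ℤ) + z

/-- For `2 ≤ t ≤ z + 1`, the empty partition is the only `z`-asymmetric `t`-core. -/
theorem zAsymmetric_tcore_trivial
    (z t : ℕ) (hz : 1 ≤ z) (ht : 2 ≤ t) (htz : t ≤ z + 1)
    (m : ℕ) (lam : Fin m → ℕ)
    (hanti : ∀ j k : Fin m, j ≤ k → lam k ≤ lam j)
    (hcore : IsTCore t m lam)
    (hasym : ZAsym (z : ℤ) m lam) :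
    ∀ j : Fin m, lam j = 0 := by
  intro j0
  by_contra h0
  have hm : 0 < m := j0.pos
  set i0 : Fin m := ⟨0, hm⟩ with hi0
  have hi0v : (i0 : ℕ) = 0 := rfl
  have hij0 : i0 ≤ j0 := by rw [Fin.le_def]; exact Nat.zero_le _
  have hlam0 : 1 ≤ lam i0 := le_trans (by omega) (hanti i0 j0 hij0)
  -- basic identity for beta numbers
  have hbeta : ∀ j : Fin m, betaSet m lam j + (j : ℕ) + 1 = lam j + m := by
    intro j
    have hj := j.isLt
    simp only [betaSet]
    omega
  have hbinj : Function.Injective (betaSet m lam) := by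
    intro a b hab
    rcases lt_trichotomy (a : ℕ) (b : ℕ) with h | h | h
    · exfalso
      have h1 := hbeta a
      have h2 := hbeta b
      have h3 := hanti a b (by rw [Fin.le_def]; omega)
      omega
    · exact Fin.ext h
    · exfalso
      have h1 := hbeta a
      have h2 := hbeta b
      have h3 := hanti b a (by rw [Fin.le_def]; omega)
      omega
  -- rank facts
  have hrank_le : rankP m lam ≤ m := by
    apply Finset.sup_le
    intro j hj
    exact j.isLt
  have hrank_lam : ∀ i : Fin m, (i : ℕ) + 1 ≤ rankP m lam → (i : ℕ) + 1 ≤ lam i := by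
    intro i hi
    rw [rankP, Finset.le_sup_iff (by simp : (⊥ : ℕ) < (i : ℕ) + 1)] at hi
    obtain ⟨j, hj, hij⟩ := hi
    rw [Finset.mem_filter] at hj
    have h3 := hanti i j (by rw [Fin.le_def]; omega)
    omega
  have hrpos : 1 ≤ rankP m lam := by
    have hmem : i0 ∈ Finset.univ.filter fun j : Fin m => (j : ℕ) + 1 ≤ lam j := by
      rw [Finset.mem_filter]
      exact ⟨Finset.mem_univ _, by omega⟩
    have hle : (i0 : ℕ) + 1 ≤ (Finset.univ.filter fun j : Fin m => (j : ℕ) + 1 ≤ lam j).sup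
        (fun j : Fin m => (j : ℕ) + 1) := Finset.le_sup (f := fun j : Fin m => (j : ℕ) + 1) hmem
    rw [rankP]
    omega
  have hrank_card :
      (Finset.univ.filter fun j : Fin m => (j : ℕ) + 1 ≤ lam j).card ≤ rankP m lam := by
    rw [← Finset.card_range (rankP m lam)]
    apply Finset.card_le_card_of_injOn (fun j : Fin m => (j : ℕ))
    · intro j hj
      have hle : (j : ℕ) + 1 ≤ (Finset.univ.filter fun j : Fin m => (j : ℕ) + 1 ≤ lam j).sup
          (fun j : Fin m => (j : ℕ) + 1) := Finset.le_sup (f := fun j : Fin m => (j : ℕ) + 1) hj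
      simp only [Finset.mem_coe, Finset.mem_range]
      rw [rankP]
      omega
    · intro a _ b _ hab
      exact Fin.ext hab
  -- conjugate bound: lam j + λ'_c ≠ j + c
  have hconj : ∀ (c : ℕ) (j : Fin m), 1 ≤ c →
      lam j + (Finset.univ.filter fun k : Fin m => c ≤ lam k).card ≠ (j : ℕ) + c := by
    intro c j hc
    by_cases h : c ≤ lam j
    · have hsub : Finset.Iic j ⊆ Finset.univ.filter fun k : Fin m => c ≤ lam k := by
        intro k hk
        rw [Finset.mem_Iic] at hk
        rw [Finset.mem_filter]
        exact ⟨Finset.mem_univ _, le_trans h (hanti k j hk)⟩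
      have hcard := Finset.card_le_card hsub
      rw [Fin.card_Iic] at hcard
      omega
    · have hsub : (Finset.univ.filter fun k : Fin m => c ≤ lam k) ⊆ Finset.Iio j := by
        intro k hk
        rw [Finset.mem_filter] at hk
        rw [Finset.mem_Iio]
        by_contra hkj
        push_neg at hkj
        have := hanti j k hkj
        omega
      have hcard := Finset.card_le_card hsub
      rw [Fin.card_Iio] at hcard
      omega
  -- asymmetry, in ℕ
  have hasymN : ∀ i : Fin m, (i : ℕ) + 1 ≤ rankP m lam →
      (Finset.univ.filter fun j : Fin m => (i : ℕ) + 1 ≤ lam j).card = lam i + z := by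
    intro i hi
    have h := hasym i hi
    exact_mod_cast h
  have hLm : lam i0 + z ≤ m := by
    rw [← hasymN i0 (by omega)]
    exact le_trans (Finset.card_filter_le _ _) (le_of_eq (by simp))
  set s := m - (lam i0 + z) with hsdef
  -- gap values are not beta numbers
  have hgap : ∀ i : Fin m, (i : ℕ) + 1 ≤ rankP m lam → ∀ j : Fin m,
      betaSet m lam j + (lam i + z) ≠ m + (i : ℕ) := by
    intro i hi j heq
    have h1 := hbeta j
    have h2 := hasymN i hi
    have hc := hconj ((i : ℕ) + 1) j (by omega)
    rw [h2] at hc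
    omega
  set B : Finset ℕ := Finset.image (betaSet m lam) Finset.univ with hBdef
  have hBcard : B.card = m := by
    rw [hBdef, Finset.card_image_of_injective _ hbinj, Finset.card_univ, Fintype.card_fin]
  -- the chain: s + k*t is never a beta number
  have hchain : ∀ k : ℕ, s + k * t ∉ B := by
    intro k
    induction k with
    | zero =>
      intro hs
      rw [hBdef, Finset.mem_image] at hs
      obtain ⟨j, -, hj⟩ := hs
      exact hgap i0 (by omega) j (by omega)
    | succ k ih =>
      intro hs
      rw [hBdef, Finset.mem_image] at hs
      obtain ⟨j, -, hj⟩ := hs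
      have hsucc : (k + 1) * t = k * t + t := by ring
      have hjt : t ≤ betaSet m lam j := by omega
      obtain ⟨k', hk'⟩ := hcore j hjt
      apply ih
      rw [hBdef, Finset.mem_image]
      exact ⟨k', Finset.mem_univ _, by omega⟩
  -- the gap set
  set G : Finset ℕ := Finset.image (fun i : Fin m => m + (i : ℕ) - (lam i + z))
      (Finset.univ.filter fun i : Fin m => (i : ℕ) + 1 ≤ rankP m lam) with hGdef
  have hfiltr : (Finset.univ.filter fun i : Fin m => (i : ℕ) + 1 ≤ rankP m lam).card
      = rankP m lam := by
    have h := Finset.card_bij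
      (s := Finset.univ.filter fun i : Fin m => (i : ℕ) + 1 ≤ rankP m lam)
      (t := Finset.range (rankP m lam)) (fun (i : Fin m) _ => (i : ℕ)) ?_ ?_ ?_
    · rw [h, Finset.card_range]
    · intro a ha
      rw [Finset.mem_filter] at ha
      rw [Finset.mem_range]
      show (a : ℕ) < rankP m lam
      omega
    · intro a _ b _ hab
      exact Fin.ext hab
    · intro n hn
      rw [Finset.mem_range] at hn
      refine ⟨⟨n, lt_of_lt_of_le hn hrank_le⟩, ?_, rfl⟩
      rw [Finset.mem_filter]
      refine ⟨Finset.mem_univ _, ?_⟩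
      show n + 1 ≤ rankP m lam
      omega
  have hGcard : G.card = rankP m lam := by
    rw [hGdef, Finset.card_image_of_injOn, hfiltr]
    intro a ha b hb hab
    have hab' : m + (a : ℕ) - (lam a + z) = m + (b : ℕ) - (lam b + z) := hab
    simp only [Finset.coe_filter, Set.mem_setOf_eq, Finset.mem_univ, true_and] at ha hb
    have h1 := hrank_lam a ha
    have h2 := hrank_lam b hb
    have h3 : lam a ≤ lam i0 := hanti i0 a (by rw [Fin.le_def]; omega)
    have h4 : lam b ≤ lam i0 := hanti i0 b (by rw [Fin.le_def]; omega)
    rcases lt_trichotomy (a : ℕ) (b : ℕ) with h | h | h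
    · have := hanti a b (by rw [Fin.le_def]; omega)
      omega
    · exact Fin.ext h
    · have := hanti b a (by rw [Fin.le_def]; omega)
      omega
  -- counting
  set I : Finset ℕ := Finset.Ico s m with hIdef
  have hIcard : I.card = lam i0 + z := by
    rw [hIdef, Nat.card_Ico]
    omega
  have hhigh : (B.filter fun x => ¬ x < s ∧ ¬ x < m).card ≤ rankP m lam := by
    have hsub : (B.filter fun x => ¬ x < s ∧ ¬ x < m) ⊆
        Finset.image (betaSet m lam)
          (Finset.univ.filter fun j : Fin m => (j : ℕ) + 1 ≤ lam j) := by
      intro x hx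
      rw [Finset.mem_filter, hBdef, Finset.mem_image] at hx
      obtain ⟨⟨j, -, hj⟩, -, hxm⟩ := hx
      rw [Finset.mem_image]
      refine ⟨j, ?_, hj⟩
      rw [Finset.mem_filter]
      have h1 := hbeta j
      exact ⟨Finset.mem_univ _, by omega⟩
    exact le_trans (Finset.card_le_card hsub)
      (le_trans Finset.card_image_le hrank_card)
  have hlow : (B.filter fun x => x < s).card ≤ s := by
    have hsub : (B.filter fun x => x < s) ⊆ Finset.range s := by
      intro x hx
      rw [Finset.mem_filter] at hx
      rw [Finset.mem_range]
      exact hx.2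
    simpa using Finset.card_le_card hsub
  have e1 : (B.filter fun x => x < s).card + (B.filter fun x => ¬ x < s).card = B.card :=
    Finset.card_filter_add_card_filter_not _
  have e2 : ((B.filter fun x => ¬ x < s).filter fun x => x < m).card
      + ((B.filter fun x => ¬ x < s).filter fun x => ¬ x < m).card
      = (B.filter fun x => ¬ x < s).card :=
    Finset.card_filter_add_card_filter_not _
  rw [Finset.filter_filter, Finset.filter_filter] at e2
  have hinter : I ∩ B = B.filter fun x => ¬ x < s ∧ x < m := by
    ext x
    rw [Finset.mem_inter, Finset.mem_filter, hIdef, Finset.mem_Ico]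
    constructor
    · rintro ⟨⟨hx1, hx2⟩, hx3⟩
      exact ⟨hx3, by omega, hx2⟩
    · rintro ⟨hx1, hx2, hx3⟩
      exact ⟨⟨by omega, hx3⟩, hx1⟩
  have hsdc := Finset.card_sdiff_add_card_inter I B
  have hIBle : (I \ B).card ≤ rankP m lam := by
    rw [hinter] at hsdc
    omega
  have hGsub : G ⊆ I \ B := by
    intro x hx
    rw [hGdef, Finset.mem_image] at hx
    obtain ⟨i, hi, rfl⟩ := hx
    rw [Finset.mem_filter] at hi
    have h1 := hrank_lam i hi.2
    have h2 : lam i ≤ lam i0 := hanti i0 i (by rw [Fin.le_def]; omega)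
    have h3 := i.isLt
    rw [Finset.mem_sdiff, hIdef, Finset.mem_Ico]
    refine ⟨⟨by omega, by omega⟩, ?_⟩
    intro hxB
    rw [hBdef, Finset.mem_image] at hxB
    obtain ⟨j, -, hj⟩ := hxB
    exact hgap i hi.2 j (by omega)
  have hGeq : G = I \ B :=
    Finset.eq_of_subset_of_card_le hGsub (by rw [hGcard]; exact hIBle)
  -- endgame
  have hdm := Nat.div_add_mod (lam i0 + z - 1) t
  have hmod : (lam i0 + z - 1) % t < t := Nat.mod_lt _ (by omega)
  set k := (lam i0 + z - 1) / t with hkdef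
  have hcomm : k * t = t * k := Nat.mul_comm k t
  have hmemIB : s + k * t ∈ I \ B := by
    rw [Finset.mem_sdiff, hIdef, Finset.mem_Ico]
    exact ⟨⟨by omega, by omega⟩, hchain k⟩
  rw [← hGeq, hGdef, Finset.mem_image] at hmemIB
  obtain ⟨i, hi, hgi⟩ := hmemIB
  rw [Finset.mem_filter] at hi
  have h1 := hrank_lam i hi.2
  have h2 : lam i ≤ lam i0 := hanti i0 i (by rw [Fin.le_def]; omega)
  have hbi := hbeta i
  have hsucc : (k + 1) * t = k * t + t := by ring
  apply hchain (k + 1)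
  rw [hBdef, Finset.mem_image]
  exact ⟨i, Finset.mem_univ _, by omega⟩
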